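/- For f(X) := ‖X‖_F² over the spectahedron S, the duality gap g(X) := X • ∇f(X) - λ_min(∇f(X)) satisfies g(X) ≥ 1/k for every X ∈ S with rank(X) ≤ k < n. -/

import Mathlib

open Matrix

lemma trace_eq_sum_eigs' (n : ℕ) (A : Matrix (Fin n) (Fin n) ℝ) (hA : A.IsHermitian) :
    A.trace = ∑ i, hA.eigenvalues i := by
  have hu : star (hA.eigenvectorUnitary : Matrix (Fin n) (Fin n) ℝ) * hA.eigenvectorUnitary = 1 :=
    Matrix.mem_unitaryGroup_iff'.mp (hA.eigenvectorUnitary).2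
  conv_lhs => rw [hA.spectral_theorem, Unitary.conjStarAlgAut_apply]
  rw [Matrix.trace_mul_cycle, hu, one_mul]
  simp [Matrix.trace_diagonal]

lemma trace_sq_eq_sum_eigs_sq' (n : ℕ) (A : Matrix (Fin n) (Fin n) ℝ) (hA : A.IsHermitian) :
    (A * A).trace = ∑ i, hA.eigenvalues i ^ 2 := by
  have hu : star (hA.eigenvectorUnitary : Matrix (Fin n) (Fin n) ℝ) * hA.eigenvectorUnitary = 1 :=
    Matrix.mem_unitaryGroup_iff'.mp (hA.eigenvectorUnitary).2
  set U : Matrix (Fin n) (Fin n) ℝ := ↑hA.eigenvectorUnitary with hUdef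
  set D : Matrix (Fin n) (Fin n) ℝ := diagonal (RCLike.ofReal ∘ hA.eigenvalues) with hDdef
  conv_lhs => rw [hA.spectral_theorem, Unitary.conjStarAlgAut_apply]
  simp only [← hUdef, ← hDdef]
  rw [Matrix.trace_mul_cycle, mul_assoc (U*D) (star U) (U*D), ← mul_assoc (star U) U D,
    hu, one_mul, Matrix.trace_mul_cycle, ← mul_assoc (star U) U D, hu, one_mul,
    hDdef, Matrix.diagonal_mul_diagonal]
  simp [Matrix.trace_diagonal, pow_two]

/-- For `f(X) = ‖X‖_F²` over the spectahedron (`∇f(X) = 2X`), the duality gap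
`g(X) = X • ∇f(X) - λ_min(∇f(X))` is at least `1/k` for every `X` in the
spectahedron with rank at most `k < n`. -/
theorem duality_gap_lower_bound_low_rank_spectahedron
    (n k : ℕ) (hkn : k < n) (X : Matrix (Fin n) (Fin n) ℝ)
    (hX : X.PosSemidef) (htr : X.trace = 1) (hrank : X.rank ≤ k) :
    ((((2 : ℝ) • X).transpose * X).trace) -
      (⨅ i, (show ((2 : ℝ) • X).IsHermitian by
          unfold Matrix.IsHermitian at *
          rw [Matrix.conjTranspose_smul, hX.1]
          simp).eigenvalues i) ≥ 1 / (k : ℝ) := by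
  have hn : 0 < n := lt_of_le_of_lt (Nat.zero_le k) hkn
  haveI : Nonempty (Fin n) := ⟨⟨0, hn⟩⟩
  have hH : X.IsHermitian := hX.1
  have h2 : ((2 : ℝ) • X).IsHermitian := by
    unfold Matrix.IsHermitian at *
    rw [Matrix.conjTranspose_smul, hX.1]
    simp
  show ((((2 : ℝ) • X).transpose * X).trace) - (⨅ i, h2.eigenvalues i) ≥ 1 / (k : ℝ)
  -- positive semidefiniteness of 2X
  have h2psd : ((2 : ℝ) • X).PosSemidef := by
    exact hX.smul (by norm_num : (0:ℝ) ≤ 2)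
  have hnn : ∀ i, 0 ≤ h2.eigenvalues i := fun i => h2psd.eigenvalues_nonneg i
  -- rank of 2X is at most k < n, so some eigenvalue is zero
  have hrank2 : ((2 : ℝ) • X).rank ≤ k := by
    have : (2 : ℝ) • X = ((2 : ℝ) • (1 : Matrix (Fin n) (Fin n) ℝ)) * X := by
      rw [Matrix.smul_mul, one_mul]
    rw [this]
    exact le_trans (Matrix.rank_mul_le_right _ _) hrank
  have hzero : ∃ i, h2.eigenvalues i = 0 := by
    by_contra h
    push_neg at h
    have hcard : ((2 : ℝ) • X).rank = Fintype.card {i // h2.eigenvalues i ≠ 0} :=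
      h2.rank_eq_card_non_zero_eigs
    have : Fintype.card {i // h2.eigenvalues i ≠ 0} = n := by
      rw [Fintype.card_subtype]
      rw [Finset.filter_true_of_mem (fun i _ => h i)]
      simp
    omega
  have hinf : (⨅ i, h2.eigenvalues i) = 0 := by
    obtain ⟨i, hi⟩ := hzero
    refine le_antisymm ?_ (le_ciInf hnn)
    calc ⨅ i, h2.eigenvalues i ≤ h2.eigenvalues i :=
          ciInf_le (Set.Finite.bddBelow (Set.finite_range _)) i
      _ = 0 := hi
  rw [hinf, sub_zero]
  -- transpose of 2X is 2X
  have hXt : ((2 : ℝ) • X).transpose = (2 : ℝ) • X := by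
    have : X.transpose = X := by
      ext i j
      have h := congrFun (congrFun hH i) j
      simpa [Matrix.conjTranspose_apply] using h
    rw [Matrix.transpose_smul, this]
  rw [hXt, Matrix.smul_mul, Matrix.trace_smul, trace_sq_eq_sum_eigs_sq' n X hH]
  -- eigenvalue facts for X
  set lam : Fin n → ℝ := hH.eigenvalues with hlam
  have hsum : ∑ i, lam i = 1 := by rw [← trace_eq_sum_eigs' n X hH, htr]
  set s : Finset (Fin n) := Finset.univ.filter (fun i => lam i ≠ 0) with hs
  have hcards : s.card ≤ k := by
    have hcard : X.rank = Fintype.card {i // lam i ≠ 0} := hH.rank_eq_card_non_zero_eigs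
    have hsc : Fintype.card {i // lam i ≠ 0} = s.card := by
      rw [Fintype.card_subtype, hs]
    omega
  have hsums : ∑ i ∈ s, lam i = 1 := by
    rw [hs, Finset.sum_filter_ne_zero, hsum]
  have key : (1 : ℝ) ≤ (k : ℝ) * ∑ i, lam i ^ 2 := by
    calc (1 : ℝ) = (∑ i ∈ s, lam i) ^ 2 := by rw [hsums]; norm_num
      _ ≤ (s.card : ℝ) * ∑ i ∈ s, lam i ^ 2 := by
          exact sq_sum_le_card_mul_sum_sq
      _ ≤ (k : ℝ) * ∑ i, lam i ^ 2 := by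
          apply mul_le_mul
          · exact_mod_cast hcards
          · exact Finset.sum_le_sum_of_subset_of_nonneg (Finset.filter_subset _ _)
              (fun i _ _ => sq_nonneg _)
          · exact Finset.sum_nonneg fun i _ => sq_nonneg _
          · exact Nat.cast_nonneg k
  have hk0 : (0 : ℝ) < k := by
    rcases Nat.eq_zero_or_pos k with hk | hk
    · exfalso; rw [hk] at key; simp at key; linarith
    · exact_mod_cast hk
  have hT : (1 : ℝ) / k ≤ ∑ i, lam i ^ 2 := by
    rw [div_le_iff₀ hk0]
    linarith [key]
  have hTnn : (0 : ℝ) ≤ ∑ i, lam i ^ 2 := Finset.sum_nonneg fun i _ => sq_nonneg _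
  calc (2 : ℝ) * ∑ i, lam i ^ 2 ≥ ∑ i, lam i ^ 2 := by linarith
    _ ≥ 1 / (k : ℝ) := hT
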